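/- (Far-field interactions, Lemma 6.4.) Let n ≥ 1 and N ≥ 1 be integers and t, s, p ∈ ℝ with s + t > 0, p + t > 0 and p > s. Let ∇ be a countable index set with a level function |·| : ∇ → ℕ, and to each λ ∈ ∇ associate a nonempty bounded set Ω_λ ⊆ ℝ^N; set δ(λ, μ) = 2^{min(|λ|,|μ|)} dist(Ω_λ, Ω_μ). Assume the counting estimate: for every β > 0 there is a constant C_β such that for all ν ∈ ∇, m ∈ ℕ and R > 0, Σ_{μ : |μ| = m, δ(ν,μ) ≥ R} δ(ν, μ)^{−(n+β)} ≤ C_β R^{−β} 2^{n·max(0, m − |ν|)}. Let Λᶜ ⊆ ∇ with a function ℓ : Λᶜ → ℕ satisfying ℓ_λ ≤ |λ|, let ε > 0 and C₀ > 0, and let F = (F_{λμ})_{λ∈Λᶜ, μ∈∇} be real numbers such that F_{λμ} = 0 whenever dist(Ω_λ, Ω_μ) < ε·max(2^{−ℓ_λ}, 2^{−|μ|}), and |F_{λμ}| ≤ C₀ (2^{−||λ|−|μ||/2} / δ(λ, μ))^{n+2t+2p} otherwise. Then there exists a constant C, depending only on n, t, s, p, ε, C₀ and the constants C_β, such that for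 every v ∈ ℓ²(∇): Σ_{λ∈Λᶜ} 2^{2(|λ|−ℓ_λ)(s+t)} ( Σ_{μ∈∇} |F_{λμ}| |v_μ| )² ≤ C Σ_{μ∈∇} |v_μ|². -/

import Mathlib

open scoped ENNReal

/-- The distance between two subsets of a metric space:
`setDist A B = inf { dist x y : x ∈ A, y ∈ B }`. -/
noncomputable def setDist {X : Type*} [PseudoMetricSpace X] (A B : Set X) : ℝ :=
  sInf (Set.image2 dist A B)


open MeasureTheory in
lemma ennreal_cauchy_schwarz {ι : Type*} [Countable ι] (f g : ι → ℝ≥0∞) :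
    (∑' i, f i * g i) ^ 2 ≤ (∑' i, f i ^ 2) * (∑' i, g i ^ 2) := by
  letI : MeasurableSpace ι := ⊤
  haveI : MeasurableSingletonClass ι := ⟨fun _ => trivial⟩
  have h2 : (2:ℝ).HolderConjugate 2 := by
    constructor <;> norm_num
  have := ENNReal.lintegral_mul_le_Lp_mul_Lq (Measure.count (α := ι)) h2
    (f := f) (g := g) (AEMeasurable.of_discrete) (AEMeasurable.of_discrete)
  simp only [Pi.mul_apply, lintegral_count] at this
  have key : ∑' i, f i * g i ≤ (∑' i, f i ^ (2:ℝ)) ^ (1/(2:ℝ)) * (∑' i, g i ^ (2:ℝ)) ^ (1/(2:ℝ)) := this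
  calc (∑' i, f i * g i) ^ 2
      ≤ ((∑' i, f i ^ (2:ℝ)) ^ (1/(2:ℝ)) * (∑' i, g i ^ (2:ℝ)) ^ (1/(2:ℝ))) ^ 2 := by
        exact pow_le_pow_left' key 2
    _ = (∑' i, f i ^ 2) * (∑' i, g i ^ 2) := by
        rw [mul_pow]
        congr 1 <;>
        · rw [← ENNReal.rpow_natCast (_ ^ (1/(2:ℝ))) 2, ← ENNReal.rpow_mul]
          norm_num

lemma cs_ofReal {ι : Type*} [Countable ι] (x y : ι → ℝ) (hx : ∀ i, 0 ≤ x i) (hy : ∀ i, 0 ≤ y i) :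
    (∑' i, ENNReal.ofReal (x i * y i)) ^ 2
      ≤ (∑' i, ENNReal.ofReal (x i ^ 2)) * (∑' i, ENNReal.ofReal (y i ^ 2)) := by
  have h := ennreal_cauchy_schwarz (fun i => ENNReal.ofReal (x i)) (fun i => ENNReal.ofReal (y i))
  have e1 : ∀ i : ι, ENNReal.ofReal (x i * y i) = ENNReal.ofReal (x i) * ENNReal.ofReal (y i) :=
    fun i => ENNReal.ofReal_mul (hx i)
  have e2 : ∀ i : ι, ENNReal.ofReal (x i ^ 2) = ENNReal.ofReal (x i) ^ 2 :=
    fun i => ENNReal.ofReal_pow (hx i) 2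
  have e3 : ∀ i : ι, ENNReal.ofReal (y i ^ 2) = ENNReal.ofReal (y i) ^ 2 :=
    fun i => ENNReal.ofReal_pow (hy i) 2
  rw [tsum_congr e1, tsum_congr e2, tsum_congr e3]
  exact h

lemma k_le_bound (L l m : ℝ) (h : l ≤ L) :
    L - l ≤ max 0 (L - m) + max 0 (min L m - l) := by
  rcases le_total m L with h1 | h1
  · rw [min_eq_right h1]
    have e : L - l = (L - m) + (m - l) := by ring
    rw [e]
    exact add_le_add (le_max_right _ _) (le_max_right _ _)
  · rw [min_eq_left h1]
    have := le_max_right (0:ℝ) (L - l)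
    have := le_max_left (0:ℝ) (L - m)
    linarith

lemma setDist_comm {X : Type*} [PseudoMetricSpace X] (A B : Set X) :
    setDist A B = setDist B A := by
  unfold setDist
  rw [Set.image2_swap]
  simp only [dist_comm]

lemma setDist_nonneg {X : Type*} [PseudoMetricSpace X] (A B : Set X) :
    0 ≤ setDist A B := by
  apply Real.sInf_nonneg
  rintro x ⟨a, _, b, _, rfl⟩
  exact dist_nonneg

-- max of two negative powers of 2
lemma max_rpow_neg (x y : ℝ) :
    max ((2:ℝ) ^ (-x)) ((2:ℝ) ^ (-y)) = (2:ℝ) ^ (-(min x y)) := by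
  rcases le_total x y with h | h
  · rw [min_eq_left h, max_eq_left (Real.rpow_le_rpow_of_exponent_le one_le_two (by linarith))]
  · rw [min_eq_right h, max_eq_right (Real.rpow_le_rpow_of_exponent_le one_le_two (by linarith))]

lemma min_sub_min_eq_max (L l m : ℝ) (h : l ≤ L) :
    min L m - min l m = max 0 (min L m - l) := by
  rcases le_total m l with h1 | h1
  · rw [min_eq_right (le_trans h1 h), min_eq_right h1, max_eq_left (by linarith)]
    ring
  · rcases le_total m L with h2 | h2
    · rw [min_eq_right h2, min_eq_left h1, max_eq_right (by linarith)]
    · rw [min_eq_left h2, min_eq_left h1, max_eq_right (by linarith)]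

-- comparison of tsums with a conditional bound
lemma tsum_le_of_cond {I : Type*} (Q : I → Prop) [DecidablePred Q] (h : I → ℝ≥0∞) (g : I → ℝ≥0∞) (S : ℝ≥0∞)
    (hg : ∀ μ, g μ ≤ if Q μ then h μ else 0) (hS : ∑' μ : {μ // Q μ}, h μ.1 ≤ S) :
    ∑' μ, g μ ≤ S := by
  classical
  calc ∑' μ, g μ ≤ ∑' μ, (if Q μ then h μ else 0) := Summable.tsum_le_tsum hg ENNReal.summable ENNReal.summable
    _ = ∑' μ : {x | Q x}, h μ.1 := by
        rw [tsum_subtype]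
        exact tsum_congr fun μ => by by_cases hq : Q μ <;> simp [Set.indicator, hq]
    _ ≤ S := hS

-- decomposition of a tsum over levels
lemma tsum_eq_tsum_levels {I : Type*} (lvl : I → ℕ) (f : I → ℝ≥0∞) :
    ∑' i, f i = ∑' (m : ℕ) (i : I), (if lvl i = m then f i else 0) := by
  classical
  rw [← (Equiv.sigmaFiberEquiv lvl).tsum_eq f, ENNReal.tsum_sigma']
  refine tsum_congr fun m => ?_
  have h1 : ∑' (b : { x // lvl x = m }), f ((Equiv.sigmaFiberEquiv lvl) ⟨m, b⟩)
      = ∑' (b : { x // lvl x = m }), f b.1 := tsum_congr fun b => rfl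
  rw [h1]
  exact (tsum_subtype {i | lvl i = m} f).trans
    (tsum_congr fun i => by by_cases hq : lvl i = m <;> simp [Set.indicator, hq])

-- geometric series bound
lemma geom_abs_bound (r : ℝ) (h0 : 0 < r) (h1 : r < 1) (L : ℕ) :
    ∑' m : ℕ, ENNReal.ofReal (r ^ |(m:ℝ) - (L:ℝ)|) ≤ ENNReal.ofReal (2 * (1 - r)⁻¹) := by
  have hsum : ∀ m : ℕ, ENNReal.ofReal (r ^ |(m:ℝ) - (L:ℝ)|) ≤
      ENNReal.ofReal ((if m < L then (r ^ (L - m) : ℝ) else 0) + (if L ≤ m then (r ^ (m - L) : ℝ) else 0)) := by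
    intro m
    apply ENNReal.ofReal_le_ofReal
    rcases lt_or_ge m L with h | h
    · rw [if_pos h, if_neg (by omega)]
      have : |(m:ℝ) - L| = ((L - m : ℕ) : ℝ) := by
        rw [abs_of_nonpos (by push_cast [Nat.cast_le.2 h.le]; linarith [(Nat.cast_le (α := ℝ)).2 h.le])]
        push_cast [Nat.cast_sub h.le]
        ring
      rw [this, Real.rpow_natCast]
      simp
    · rw [if_pos h, if_neg (by omega)]
      have : |(m:ℝ) - L| = ((m - L : ℕ) : ℝ) := by
        rw [abs_of_nonneg (by linarith [(Nat.cast_le (α := ℝ)).2 h])]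
        push_cast [Nat.cast_sub h]
        ring
      rw [this, Real.rpow_natCast]
      simp
  calc ∑' m : ℕ, ENNReal.ofReal (r ^ |(m:ℝ) - (L:ℝ)|)
      ≤ ∑' m : ℕ, ENNReal.ofReal ((if m < L then (r ^ (L - m) : ℝ) else 0) + (if L ≤ m then (r ^ (m - L) : ℝ) else 0)) :=
        Summable.tsum_le_tsum hsum ENNReal.summable ENNReal.summable
    _ = (∑' m : ℕ, ENNReal.ofReal (if m < L then (r ^ (L - m) : ℝ) else 0))
        + (∑' m : ℕ, ENNReal.ofReal (if L ≤ m then (r ^ (m - L) : ℝ) else 0)) := by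
        rw [← ENNReal.tsum_add]
        refine tsum_congr fun m => ?_
        rw [ENNReal.ofReal_add (by split <;> positivity) (by split <;> positivity)]
    _ ≤ ENNReal.ofReal ((1 - r)⁻¹) + ENNReal.ofReal ((1 - r)⁻¹) := by
        have hr1 : (0:ℝ) < 1 - r := by linarith
        have hgeo : ∑' (j : ℕ), r ^ j = (1 - r)⁻¹ := tsum_geometric_of_lt_one h0.le h1
        gcongr
        · -- head sum
          rw [tsum_eq_sum (s := Finset.range L)
              (by intro b hb; rw [if_neg (by simpa using hb)]; exact ENNReal.ofReal_zero),
            ← ENNReal.ofReal_sum_of_nonneg (by intro i hi; split <;> positivity)]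
          apply ENNReal.ofReal_le_ofReal
          have he : ∑ m ∈ Finset.range L, (if m < L then (r ^ (L - m) : ℝ) else 0)
              = ∑ j ∈ Finset.range L, r ^ (j + 1) := by
            rw [← Finset.sum_range_reflect (fun j => r ^ (j+1)) L]
            refine Finset.sum_congr rfl fun m hm => ?_
            rw [if_pos (Finset.mem_range.1 hm)]
            have hx : L - m = (L - 1 - m) + 1 := by
              have := Finset.mem_range.1 hm; omega
            rw [hx]
          rw [he, ← hgeo]
          calc ∑ j ∈ Finset.range L, r ^ (j + 1) ≤ ∑ j ∈ Finset.range L, r ^ j := by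
                apply Finset.sum_le_sum
                intro i _
                calc r ^ (i+1) = r * r ^ i := by ring
                  _ ≤ 1 * r ^ i := by apply mul_le_mul_of_nonneg_right h1.le; positivity
                  _ = r ^ i := one_mul _
            _ ≤ ∑' (j : ℕ), r ^ j := Summable.sum_le_tsum _ (fun i _ => by positivity)
                (summable_geometric_of_lt_one h0.le h1)
        · -- tail sum
          have hinj : Function.Injective (fun j : ℕ => j + L) := fun a b h => by simpa using h
          have hsupp : Function.support (fun m : ℕ => ENNReal.ofReal (if L ≤ m then (r ^ (m - L) : ℝ) else 0))
              ⊆ Set.range (fun j : ℕ => j + L) := by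
            intro m hm
            rcases le_or_gt L m with h | h
            · exact ⟨m - L, by show m - L + L = m; omega⟩
            · exfalso
              apply hm
              have hno : ¬ L ≤ m := by omega
              simp [hno]
          have hterm : ∀ j : ℕ, ENNReal.ofReal (if L ≤ j + L then (r ^ (j + L - L) : ℝ) else 0)
              = ENNReal.ofReal (r ^ j) := by
            intro j
            rw [if_pos (by omega)]
            have hj : j + L - L = j := by omega
            rw [hj]
          rw [← hinj.tsum_eq hsupp, tsum_congr hterm,
            ← ENNReal.ofReal_tsum_of_nonneg (fun j => by positivity)
              (summable_geometric_of_lt_one h0.le h1), hgeo]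
    _ = ENNReal.ofReal (2 * (1 - r)⁻¹) := by
        rw [← ENNReal.ofReal_add (by rw [inv_nonneg]; linarith) (by rw [inv_nonneg]; linarith)]
        congr 1
        ring

lemma series_bound (K c γ : ℝ) (hK : 0 ≤ K) (hγ : 0 < γ) (L : ℕ) (x : ℕ → ℝ≥0∞)
    (hx : ∀ m : ℕ, x m ≤ ENNReal.ofReal (K * 2 ^ (c - γ * |(m:ℝ) - (L:ℝ)|))) :
    ∑' m, x m ≤ ENNReal.ofReal (K * 2 ^ c * (2 * (1 - 2 ^ (-γ))⁻¹)) := by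
  have hr0 : (0:ℝ) < 2 ^ (-γ) := Real.rpow_pos_of_pos two_pos _
  have hr1 : (2:ℝ) ^ (-γ) < 1 := Real.rpow_lt_one_of_one_lt_of_neg one_lt_two (by linarith)
  calc ∑' m, x m
      ≤ ∑' m : ℕ, ENNReal.ofReal (K * 2 ^ c) * ENNReal.ofReal (((2:ℝ) ^ (-γ)) ^ (|(m:ℝ) - (L:ℝ)|)) := by
        apply Summable.tsum_le_tsum _ ENNReal.summable ENNReal.summable
        intro m
        refine (hx m).trans (le_of_eq ?_)
        rw [← ENNReal.ofReal_mul (by positivity)]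
        congr 1
        rw [mul_assoc, ← Real.rpow_mul (by norm_num : (0:ℝ) ≤ 2) (-γ),
          ← Real.rpow_add two_pos]
        ring_nf
    _ = ENNReal.ofReal (K * 2 ^ c) * ∑' m : ℕ, ENNReal.ofReal (((2:ℝ) ^ (-γ)) ^ (|(m:ℝ) - (L:ℝ)|)) :=
        ENNReal.tsum_mul_left
    _ ≤ ENNReal.ofReal (K * 2 ^ c) * ENNReal.ofReal (2 * (1 - 2 ^ (-γ))⁻¹) :=
        mul_le_mul_right (geom_abs_bound _ hr0 hr1 L) _
    _ = ENNReal.ofReal (K * 2 ^ c * (2 * (1 - 2 ^ (-γ))⁻¹)) := by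
        rw [← ENNReal.ofReal_mul (by positivity)]

lemma row_exponent_bound (aa β q γ nn L l m : ℝ)
    (hA : nn - aa/2 - q ≤ -γ) (hB : β + q - aa/2 ≤ -γ)
    (hβ : 0 ≤ β) (hlL : l ≤ L) :
    -(aa/2) * |L - m| - β * max 0 (min L m - l) + nn * max 0 (m - L) - q * m
      ≤ (-(q*L) - β*(L-l)) - γ * |m - L| := by
  rcases le_total m L with h | h
  · rw [abs_of_nonneg (by linarith), abs_of_nonpos (by linarith), min_eq_right h,
      max_eq_left (show m - L ≤ 0 by linarith)]
    rcases le_total m l with h2 | h2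
    · rw [max_eq_left (show m - l ≤ 0 by linarith)]
      have k1 := mul_le_mul_of_nonneg_right (show β + q - aa/2 + γ ≤ 0 by linarith)
        (show (0:ℝ) ≤ L - m by linarith)
      have k2 := mul_le_mul_of_nonneg_left (show l - m ≤ L - m by linarith) hβ
      nlinarith
    · rw [max_eq_right (show (0:ℝ) ≤ m - l by linarith)]
      have k1 := mul_le_mul_of_nonneg_right (show β + q - aa/2 + γ ≤ 0 by linarith)
        (show (0:ℝ) ≤ L - m by linarith)
      nlinarith
  · rw [abs_of_nonpos (by linarith), abs_of_nonneg (by linarith), min_eq_left h,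
      max_eq_right (show (0:ℝ) ≤ L - l by linarith), max_eq_right (show (0:ℝ) ≤ m - L by linarith)]
    have k1 := mul_le_mul_of_nonneg_right (show nn - aa/2 - q + γ ≤ 0 by linarith)
      (show (0:ℝ) ≤ m - L by linarith)
    nlinarith

lemma col_exponent_bound (aa c₁ q γ nn L m : ℝ)
    (hA : c₁ + nn - aa/2 - q ≤ -γ) (hB : q - aa/2 ≤ -γ) :
    -(aa/2) * |L - m| + c₁ * max 0 (L - m) + nn * max 0 (L - m) - q * L
      ≤ (-(q*m)) - γ * |L - m| := by
  rcases le_total L m with h | h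
  · rw [abs_of_nonpos (by linarith), max_eq_left (by linarith)]
    have k1 := mul_le_mul_of_nonneg_right (show q - aa/2 + γ ≤ 0 by linarith)
      (show (0:ℝ) ≤ m - L by linarith)
    nlinarith
  · rw [abs_of_nonneg (by linarith), max_eq_right (by linarith)]
    have k1 := mul_le_mul_of_nonneg_right (show c₁ + nn - aa/2 - q + γ ≤ 0 by linarith)
      (show (0:ℝ) ≤ L - m by linarith)
    nlinarith

set_option maxHeartbeats 2000000 in
/-- Far-field interactions (Lemma 6.4).  With `δ(ν,μ) = 2^{min(|ν|,|μ|)} dist(Ω_ν, Ω_μ)`,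
assume the counting estimate
`Σ_{μ : |μ| = m, δ(ν,μ) ≥ R} δ(ν,μ)^{−(n+β)} ≤ C_β R^{−β} 2^{n max(0, m−|ν|)}`,
and let `F` vanish whenever `dist(Ω_λ, Ω_μ) < ε max(2^{−ℓ_λ}, 2^{−|μ|})` and obey the
Calderón–Zygmund-type decay `|F_{λμ}| ≤ C₀ (2^{−||λ|−|μ||/2}/δ(λ,μ))^{n+2t+2p}` otherwise.
Then there is a constant `C` with
`Σ_{λ∈Λᶜ} 2^{2(|λ|−ℓ_λ)(s+t)} (Σ_μ |F_{λμ}| |v_μ|)² ≤ C Σ_μ |v_μ|²` for all `v ∈ ℓ²`.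
(All sums of nonnegative terms are interpreted in `[0,∞]`.) -/
theorem far_field_interactions
    (n N : ℕ) (hn : 1 ≤ n) (hN : 1 ≤ N)
    (t s p : ℝ) (hst : 0 < s + t) (hpt : 0 < p + t) (hsp : s < p)
    {I : Type*} [Countable I] (lvl : I → ℕ)
    (Ω : I → Set (EuclideanSpace ℝ (Fin N)))
    (hΩne : ∀ l, (Ω l).Nonempty) (hΩbdd : ∀ l, Bornology.IsBounded (Ω l))
    (Cb : ℝ → ℝ)
    (hcount : ∀ b : ℝ, 0 < b → ∀ ν : I, ∀ m : ℕ, ∀ R : ℝ, 0 < R →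
      ∑' μ : {μ : I // lvl μ = m ∧
          R ≤ (2 : ℝ) ^ (min (lvl ν) (lvl μ)) * setDist (Ω ν) (Ω μ)},
        ENNReal.ofReal
          (((2 : ℝ) ^ (min (lvl ν) (lvl μ.1)) * setDist (Ω ν) (Ω μ.1)) ^ (-((n : ℝ) + b)))
        ≤ ENNReal.ofReal
            (Cb b * R ^ (-b) * 2 ^ ((n : ℝ) * max 0 ((m : ℝ) - (lvl ν : ℝ)))))
    (Λc : Set I) (ℓ : I → ℕ) (hℓ : ∀ l ∈ Λc, ℓ l ≤ lvl l)
    (ε C₀ : ℝ) (hε : 0 < ε) (hC₀ : 0 < C₀)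
    (F : I → I → ℝ)
    (hF0 : ∀ l ∈ Λc, ∀ μ : I,
      setDist (Ω l) (Ω μ) < ε * max ((2 : ℝ) ^ (-(ℓ l : ℝ))) ((2 : ℝ) ^ (-(lvl μ : ℝ))) →
      F l μ = 0)
    (hFbd : ∀ l ∈ Λc, ∀ μ : I,
      ε * max ((2 : ℝ) ^ (-(ℓ l : ℝ))) ((2 : ℝ) ^ (-(lvl μ : ℝ))) ≤ setDist (Ω l) (Ω μ) →
      |F l μ| ≤ C₀ * ((2 : ℝ) ^ (-(|(lvl l : ℝ) - (lvl μ : ℝ)| / 2)) /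
          ((2 : ℝ) ^ (min (lvl l) (lvl μ)) * setDist (Ω l) (Ω μ)))
            ^ ((n : ℝ) + 2 * t + 2 * p)) :
    ∃ C : ℝ, 0 < C ∧ ∀ v : I → ℝ, Summable (fun μ => v μ ^ 2) →
      ∑' l : Λc,
          ENNReal.ofReal ((2 : ℝ) ^ (2 * ((lvl l.1 : ℝ) - (ℓ l.1 : ℝ)) * (s + t))) *
            (∑' μ : I, ENNReal.ofReal (|F l.1 μ| * |v μ|)) ^ 2
        ≤ ENNReal.ofReal C * ∑' μ : I, ENNReal.ofReal (v μ ^ 2) := by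
  classical
  by_cases hdeg : ∀ l ∈ Λc, ∀ μ : I, F l μ = 0
  · refine ⟨1, one_pos, fun v _ => ?_⟩
    have hz : ∀ l : Λc, (∑' μ : I, ENNReal.ofReal (|F l.1 μ| * |v μ|)) = 0 := by
      intro l
      rw [ENNReal.tsum_eq_zero]
      intro μ
      rw [hdeg l.1 l.2 μ]
      simp
    have hz2 : ∑' l : Λc,
        ENNReal.ofReal ((2 : ℝ) ^ (2 * ((lvl l.1 : ℝ) - (ℓ l.1 : ℝ)) * (s + t))) *
          (∑' μ : I, ENNReal.ofReal (|F l.1 μ| * |v μ|)) ^ 2 = 0 := by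
      rw [ENNReal.tsum_eq_zero]
      intro l
      rw [hz l]
      simp
    rw [hz2]
    exact zero_le
  push_neg at hdeg
  obtain ⟨l₀, hl₀, μ₀, hne₀⟩ := hdeg
  have hn1 : (1:ℝ) ≤ (n:ℝ) := by exact_mod_cast hn
  set aa : ℝ := (n:ℝ) + 2 * t + 2 * p with haa
  -- parameters
  obtain ⟨β, hβ0, hβtp, hβst⟩ : ∃ β : ℝ, 0 < β ∧ β ≤ t + p ∧ β ≤ s + t :=
    ⟨min (t+p) (s+t), lt_min (by linarith) hst, min_le_left _ _, min_le_right _ _⟩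
  obtain ⟨q, hq1, hq2, hq3⟩ : ∃ q : ℝ, ((n:ℝ)/2 - t - p < q) ∧
      ((n:ℝ)/2 + t + 2*s - p - β < q) ∧ (q < (n:ℝ)/2 + t + p - β) := by
    set lo := max ((n:ℝ)/2 - t - p) ((n:ℝ)/2 + t + 2*s - p - β) with hlo
    have h1 : (n:ℝ)/2 - t - p ≤ lo := le_max_left _ _
    have h2 : (n:ℝ)/2 + t + 2*s - p - β ≤ lo := le_max_right _ _
    have h3 : lo < (n:ℝ)/2 + t + p - β := max_lt (by linarith) (by linarith)
    exact ⟨(lo + ((n:ℝ)/2 + t + p - β))/2, by linarith, by linarith, by linarith⟩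
  set c₁ : ℝ := 2*(s+t) - β with hc₁def
  have hc₁ : 0 < c₁ := by simp only [hc₁def]; linarith
  set β₂ : ℝ := 2*(p-s) + β with hβ₂def
  have hβ₂ : 0 < β₂ := by simp only [hβ₂def]; linarith
  have haac : aa - c₁ = (n:ℝ) + β₂ := by simp only [haa, hc₁def, hβ₂def]; ring
  have haanb : 0 ≤ aa - (n:ℝ) - β := by simp only [haa]; linarith
  obtain ⟨γ₁, hγ₁0, hγ₁A, hγ₁B⟩ : ∃ g : ℝ, 0 < g ∧ ((n:ℝ) - aa/2 - q ≤ -g) ∧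
      (β + q - aa/2 ≤ -g) :=
    ⟨min (q + t + p - (n:ℝ)/2) ((n:ℝ)/2 + t + p - q - β),
      lt_min (by linarith) (by linarith),
      by have := min_le_left (q + t + p - (n:ℝ)/2) ((n:ℝ)/2 + t + p - q - β)
         simp only [haa]; linarith,
      by have := min_le_right (q + t + p - (n:ℝ)/2) ((n:ℝ)/2 + t + p - q - β)
         simp only [haa]; linarith⟩
  obtain ⟨γ₂, hγ₂0, hγ₂A, hγ₂B⟩ : ∃ g : ℝ, 0 < g ∧ (c₁ + (n:ℝ) - aa/2 - q ≤ -g) ∧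
      (q - aa/2 ≤ -g) :=
    ⟨min (q - ((n:ℝ)/2 + t + 2*s - p - β)) ((n:ℝ)/2 + t + p - q),
      lt_min (by linarith) (by linarith),
      by have := min_le_left (q - ((n:ℝ)/2 + t + 2*s - p - β)) ((n:ℝ)/2 + t + p - q)
         simp only [haa, hc₁def]; linarith,
      by have := min_le_right (q - ((n:ℝ)/2 + t + 2*s - p - β)) ((n:ℝ)/2 + t + p - q)
         simp only [haa]; linarith⟩
  -- positivity of the counting constants
  have hCb : ∀ b : ℝ, 0 < b → 0 < Cb b := by
    intro b hb
    have hsd : ε * max ((2:ℝ)^(-(ℓ l₀:ℝ))) ((2:ℝ)^(-(lvl μ₀:ℝ))) ≤ setDist (Ω l₀) (Ω μ₀) :=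
      not_lt.1 fun hcon => hne₀ (hF0 l₀ hl₀ μ₀ hcon)
    have hmaxpos : (0:ℝ) < max ((2:ℝ)^(-(ℓ l₀:ℝ))) ((2:ℝ)^(-(lvl μ₀:ℝ))) :=
      lt_max_of_lt_left (Real.rpow_pos_of_pos two_pos _)
    have hsd0 : 0 < setDist (Ω l₀) (Ω μ₀) := lt_of_lt_of_le (by positivity) hsd
    have hR₀pos : 0 < (2:ℝ)^(min (lvl l₀) (lvl μ₀)) * setDist (Ω l₀) (Ω μ₀) := by positivity
    have happ := hcount b hb l₀ (lvl μ₀)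
      ((2:ℝ)^(min (lvl l₀) (lvl μ₀)) * setDist (Ω l₀) (Ω μ₀)) hR₀pos
    have hterm := ENNReal.le_tsum
      (f := fun μ : {μ : I // lvl μ = lvl μ₀ ∧
          (2:ℝ)^(min (lvl l₀) (lvl μ₀)) * setDist (Ω l₀) (Ω μ₀) ≤
          (2:ℝ)^(min (lvl l₀) (lvl μ)) * setDist (Ω l₀) (Ω μ)}
        => ENNReal.ofReal
          (((2 : ℝ) ^ (min (lvl l₀) (lvl μ.1)) * setDist (Ω l₀) (Ω μ.1)) ^ (-((n : ℝ) + b))))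
      ⟨μ₀, rfl, le_refl _⟩
    have hchain := le_trans hterm happ
    have hpos1 : (0:ℝ) < ((2:ℝ)^(min (lvl l₀) (lvl μ₀)) * setDist (Ω l₀) (Ω μ₀)) ^ (-((n:ℝ) + b)) :=
      Real.rpow_pos_of_pos hR₀pos _
    have hpos2 : (0:ℝ≥0∞) < ENNReal.ofReal
        (Cb b * ((2:ℝ)^(min (lvl l₀) (lvl μ₀)) * setDist (Ω l₀) (Ω μ₀)) ^ (-b) *
          2 ^ ((n : ℝ) * max 0 ((lvl μ₀ : ℝ) - (lvl l₀ : ℝ)))) :=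
      lt_of_lt_of_le (ENNReal.ofReal_pos.2 hpos1) hchain
    have hpos3 := ENNReal.ofReal_pos.1 hpos2
    by_contra hcon
    push_neg at hcon
    have h4 : (0:ℝ) < ((2:ℝ)^(min (lvl l₀) (lvl μ₀)) * setDist (Ω l₀) (Ω μ₀)) ^ (-b) :=
      Real.rpow_pos_of_pos hR₀pos _
    have h5 : (0:ℝ) < (2:ℝ) ^ ((n : ℝ) * max 0 ((lvl μ₀ : ℝ) - (lvl l₀ : ℝ))) :=
      Real.rpow_pos_of_pos two_pos _
    nlinarith [mul_le_mul_of_nonneg_right hcon (mul_nonneg h4.le h5.le)]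
  -- geometry facts
  have hkey : ∀ l ∈ Λc, ∀ μ : I, F l μ ≠ 0 →
      ε * 2 ^ (max 0 (min ((lvl l : ℝ)) ((lvl μ : ℝ)) - (ℓ l : ℝ))) ≤
        (2 : ℝ) ^ (min (lvl l) (lvl μ)) * setDist (Ω l) (Ω μ) := by
    intro l hl μ hne
    have h1 : ε * max ((2:ℝ)^(-(ℓ l:ℝ))) ((2:ℝ)^(-(lvl μ:ℝ))) ≤ setDist (Ω l) (Ω μ) :=
      not_lt.1 fun hcon => hne (hF0 l hl μ hcon)
    rw [max_rpow_neg] at h1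
    have hll : (ℓ l : ℝ) ≤ (lvl l : ℝ) := by exact_mod_cast hℓ l hl
    have hexp : max 0 (min ((lvl l:ℝ)) ((lvl μ:ℝ)) - (ℓ l:ℝ)) =
        min ((lvl l:ℝ)) ((lvl μ:ℝ)) - min ((ℓ l:ℝ)) ((lvl μ:ℝ)) :=
      (min_sub_min_eq_max _ _ _ hll).symm
    have hcast : ((min (lvl l) (lvl μ) : ℕ) : ℝ) = min ((lvl l):ℝ) ((lvl μ):ℝ) := by
      simp [Nat.cast_min]
    calc ε * 2 ^ (max 0 (min ((lvl l:ℝ)) ((lvl μ:ℝ)) - (ℓ l:ℝ)))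
        = 2 ^ (min ((lvl l):ℝ) ((lvl μ):ℝ)) * (ε * 2 ^ (-(min ((ℓ l):ℝ) ((lvl μ):ℝ)))) := by
          rw [hexp, sub_eq_add_neg, Real.rpow_add two_pos]
          ring
      _ ≤ 2 ^ (min ((lvl l):ℝ) ((lvl μ):ℝ)) * setDist (Ω l) (Ω μ) := by
          have h2 : (0:ℝ) ≤ 2 ^ (min ((lvl l):ℝ) ((lvl μ):ℝ)) := by positivity
          exact mul_le_mul_of_nonneg_left h1 h2
      _ = (2:ℝ) ^ (min (lvl l) (lvl μ)) * setDist (Ω l) (Ω μ) := by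
          rw [← Real.rpow_natCast 2 (min (lvl l) (lvl μ)), hcast]
  have hεd0 : ∀ l ∈ Λc, ∀ μ : I, F l μ ≠ 0 →
      ε ≤ (2 : ℝ) ^ (min (lvl l) (lvl μ)) * setDist (Ω l) (Ω μ) := by
    intro l hl μ hne
    refine le_trans ?_ (hkey l hl μ hne)
    have h1 : (1:ℝ) ≤ 2 ^ (max 0 (min ((lvl l : ℝ)) ((lvl μ : ℝ)) - (ℓ l : ℝ))) := by
      rw [show (1:ℝ) = 2 ^ (0:ℝ) from (Real.rpow_zero 2).symm]
      exact Real.rpow_le_rpow_of_exponent_le one_le_two (le_max_left _ _)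
    nlinarith
  have hd0pos : ∀ l ∈ Λc, ∀ μ : I, F l μ ≠ 0 →
      0 < (2 : ℝ) ^ (min (lvl l) (lvl μ)) * setDist (Ω l) (Ω μ) :=
    fun l hl μ hne => lt_of_lt_of_le hε (hεd0 l hl μ hne)
  have hFdec : ∀ l ∈ Λc, ∀ μ : I, F l μ ≠ 0 →
      |F l μ| ≤ C₀ * 2 ^ (-(aa/2) * |(lvl l:ℝ) - (lvl μ:ℝ)|) *
        ((2 : ℝ) ^ (min (lvl l) (lvl μ)) * setDist (Ω l) (Ω μ)) ^ (-aa) := by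
    intro l hl μ hne
    have h1 : ε * max ((2:ℝ)^(-(ℓ l:ℝ))) ((2:ℝ)^(-(lvl μ:ℝ))) ≤ setDist (Ω l) (Ω μ) :=
      not_lt.1 fun hcon => hne (hF0 l hl μ hcon)
    have h2 := hFbd l hl μ h1
    have hd0 : 0 < (2:ℝ)^(min (lvl l) (lvl μ)) * setDist (Ω l) (Ω μ) := hd0pos l hl μ hne
    rw [Real.div_rpow (by positivity) (le_of_lt hd0), div_eq_mul_inv,
      ← Real.rpow_neg (le_of_lt hd0), ← Real.rpow_mul (by norm_num : (0:ℝ) ≤ 2)] at h2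
    have he : -(|(lvl l:ℝ) - (lvl μ:ℝ)|/2) * aa = -(aa/2) * |(lvl l:ℝ) - (lvl μ:ℝ)| := by ring
    rw [he] at h2
    calc |F l μ| ≤ C₀ * (2 ^ (-(aa/2) * |(lvl l:ℝ) - (lvl μ:ℝ)|) *
        ((2:ℝ)^(min (lvl l) (lvl μ)) * setDist (Ω l) (Ω μ)) ^ (-aa)) := h2
      _ = _ := by ring
  -- constants
  set S₁ : ℝ := 2 * (1 - 2^(-γ₁))⁻¹ with hS₁def
  have h2γ₁ : (2:ℝ)^(-γ₁) < 1 := Real.rpow_lt_one_of_one_lt_of_neg one_lt_two (by linarith)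
  have hS₁pos : 0 < S₁ := by
    simp only [hS₁def]
    have : (0:ℝ) < 1 - 2^(-γ₁) := by linarith
    positivity
  set S₂ : ℝ := 2 * (1 - 2^(-γ₂))⁻¹ with hS₂def
  have h2γ₂ : (2:ℝ)^(-γ₂) < 1 := Real.rpow_lt_one_of_one_lt_of_neg one_lt_two (by linarith)
  have hS₂pos : 0 < S₂ := by
    simp only [hS₂def]
    have : (0:ℝ) < 1 - 2^(-γ₂) := by linarith
    positivity
  set K₁ : ℝ := C₀ * ε^(-(aa - (n:ℝ) - β)) * (Cb β * ε^(-β)) with hK₁def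
  have hK₁pos : 0 < K₁ := by
    simp only [hK₁def]
    have h1 := hCb β hβ0
    have h2 : (0:ℝ) < ε^(-(aa - (n:ℝ) - β)) := Real.rpow_pos_of_pos hε _
    have h3 : (0:ℝ) < ε^(-β) := Real.rpow_pos_of_pos hε _
    positivity
  set K₂ : ℝ := (K₁ * S₁) * C₀ * ε^(-c₁) * (Cb β₂ * ε^(-β₂)) with hK₂def
  have hK₂pos : 0 < K₂ := by
    simp only [hK₂def]
    have h1 := hCb β₂ hβ₂
    have h2 : (0:ℝ) < ε^(-c₁) := Real.rpow_pos_of_pos hε _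
    have h3 : (0:ℝ) < ε^(-β₂) := Real.rpow_pos_of_pos hε _
    positivity
  refine ⟨K₂ * S₂, by positivity, fun v _ => ?_⟩
  -- row bound (after Cauchy-Schwarz)
  have step1 : ∀ l : I, l ∈ Λc →
      (∑' μ : I, ENNReal.ofReal (|F l μ| * |v μ|)) ^ 2 ≤
        ENNReal.ofReal (K₁ * 2 ^ (-(q * (lvl l:ℝ)) - β * ((lvl l:ℝ) - (ℓ l:ℝ))) * S₁) *
          ∑' μ : I, ENNReal.ofReal (|F l μ| * 2 ^ (q * (lvl μ:ℝ)) * v μ ^ 2) := by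
    intro l hl
    have hll : (ℓ l : ℝ) ≤ (lvl l : ℝ) := by exact_mod_cast hℓ l hl
    -- row estimate
    have hrow : (∑' μ : I, ENNReal.ofReal (|F l μ| * 2 ^ (-(q * (lvl μ:ℝ))))) ≤
        ENNReal.ofReal (K₁ * 2 ^ (-(q * (lvl l:ℝ)) - β * ((lvl l:ℝ) - (ℓ l:ℝ))) * S₁) := by
      rw [tsum_eq_tsum_levels lvl (fun μ => ENNReal.ofReal (|F l μ| * 2 ^ (-(q * (lvl μ:ℝ)))))]
      apply series_bound K₁ (-(q * (lvl l:ℝ)) - β * ((lvl l:ℝ) - (ℓ l:ℝ))) γ₁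
        (le_of_lt hK₁pos) hγ₁0 (lvl l)
      intro m
      have hepos : (0:ℝ) ≤ max 0 (min ((lvl l:ℝ)) ((m:ℝ)) - (ℓ l:ℝ)) := le_max_left _ _
      have hRpos : (0:ℝ) < ε * 2 ^ (max 0 (min ((lvl l:ℝ)) ((m:ℝ)) - (ℓ l:ℝ))) := by positivity
      have hMpos : (0:ℝ) ≤ C₀ * ε ^ (-(aa - (n:ℝ) - β)) *
          (2 ^ (-(aa/2) * |(lvl l:ℝ) - (m:ℝ)|) * 2 ^ (-(q * (m:ℝ)))) := by positivity
      apply tsum_le_of_cond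
        (fun μ : I => lvl μ = m ∧ ε * 2 ^ (max 0 (min ((lvl l:ℝ)) ((m:ℝ)) - (ℓ l:ℝ))) ≤
          (2:ℝ)^(min (lvl l) (lvl μ)) * setDist (Ω l) (Ω μ))
        (fun μ : I => ENNReal.ofReal (C₀ * ε ^ (-(aa - (n:ℝ) - β)) *
            (2 ^ (-(aa/2) * |(lvl l:ℝ) - (m:ℝ)|) * 2 ^ (-(q * (m:ℝ))))) *
          ENNReal.ofReal (((2:ℝ)^(min (lvl l) (lvl μ)) * setDist (Ω l) (Ω μ)) ^ (-((n:ℝ) + β))))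
      · -- pointwise bound
        intro μ
        by_cases h1 : lvl μ = m
        · subst h1
          by_cases h2 : F l μ = 0
          · simp [h2]
          · have hQ2 : ε * 2 ^ (max 0 (min ((lvl l:ℝ)) ((lvl μ:ℝ)) - (ℓ l:ℝ))) ≤
                (2:ℝ)^(min (lvl l) (lvl μ)) * setDist (Ω l) (Ω μ) := hkey l hl μ h2
            rw [if_pos rfl, if_pos ⟨rfl, hQ2⟩, ← ENNReal.ofReal_mul hMpos]
            apply ENNReal.ofReal_le_ofReal
            have hDpos : 0 < (2:ℝ)^(min (lvl l) (lvl μ)) * setDist (Ω l) (Ω μ) :=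
              hd0pos l hl μ h2
            have hDε : ε ≤ (2:ℝ)^(min (lvl l) (lvl μ)) * setDist (Ω l) (Ω μ) :=
              hεd0 l hl μ h2
            have hFle := hFdec l hl μ h2
            have hsplit : ((2:ℝ)^(min (lvl l) (lvl μ)) * setDist (Ω l) (Ω μ)) ^ (-aa) =
                ((2:ℝ)^(min (lvl l) (lvl μ)) * setDist (Ω l) (Ω μ)) ^ (-((n:ℝ) + β)) *
                ((2:ℝ)^(min (lvl l) (lvl μ)) * setDist (Ω l) (Ω μ)) ^ (-(aa - (n:ℝ) - β)) := by
              rw [← Real.rpow_add hDpos]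
              congr 1
              ring
            have hDε2 : ((2:ℝ)^(min (lvl l) (lvl μ)) * setDist (Ω l) (Ω μ)) ^ (-(aa - (n:ℝ) - β))
                ≤ ε ^ (-(aa - (n:ℝ) - β)) :=
              Real.rpow_le_rpow_of_nonpos hε hDε (by linarith)
            calc |F l μ| * 2 ^ (-(q * (lvl μ:ℝ)))
                ≤ (C₀ * 2 ^ (-(aa/2) * |(lvl l:ℝ) - (lvl μ:ℝ)|) *
                    ((2:ℝ)^(min (lvl l) (lvl μ)) * setDist (Ω l) (Ω μ)) ^ (-aa)) *
                  2 ^ (-(q * (lvl μ:ℝ))) :=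
                  mul_le_mul_of_nonneg_right hFle (by positivity)
              _ = (C₀ * 2 ^ (-(aa/2) * |(lvl l:ℝ) - (lvl μ:ℝ)|) * 2 ^ (-(q * (lvl μ:ℝ))) *
                    ((2:ℝ)^(min (lvl l) (lvl μ)) * setDist (Ω l) (Ω μ)) ^ (-(aa - (n:ℝ) - β))) *
                  ((2:ℝ)^(min (lvl l) (lvl μ)) * setDist (Ω l) (Ω μ)) ^ (-((n:ℝ)+β)) := by
                  rw [hsplit]; ring
              _ ≤ (C₀ * 2 ^ (-(aa/2) * |(lvl l:ℝ) - (lvl μ:ℝ)|) * 2 ^ (-(q * (lvl μ:ℝ))) *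
                    ε ^ (-(aa - (n:ℝ) - β))) *
                  ((2:ℝ)^(min (lvl l) (lvl μ)) * setDist (Ω l) (Ω μ)) ^ (-((n:ℝ)+β)) := by
                  apply mul_le_mul_of_nonneg_right _ (by positivity)
                  apply mul_le_mul_of_nonneg_left hDε2 (by positivity)
              _ = (C₀ * ε ^ (-(aa - (n:ℝ) - β)) *
                    (2 ^ (-(aa/2) * |(lvl l:ℝ) - (lvl μ:ℝ)|) * 2 ^ (-(q * (lvl μ:ℝ))))) *
                  ((2:ℝ)^(min (lvl l) (lvl μ)) * setDist (Ω l) (Ω μ)) ^ (-((n:ℝ)+β)) := by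
                  ring
        · rw [if_neg h1, if_neg (fun hq => h1 hq.1)]
      · -- sum over the restricted set, via the counting estimate
        calc ∑' μ : {μ : I // lvl μ = m ∧ ε * 2 ^ (max 0 (min ((lvl l:ℝ)) ((m:ℝ)) - (ℓ l:ℝ))) ≤
              (2:ℝ)^(min (lvl l) (lvl μ)) * setDist (Ω l) (Ω μ)},
              (ENNReal.ofReal (C₀ * ε ^ (-(aa - (n:ℝ) - β)) *
                (2 ^ (-(aa/2) * |(lvl l:ℝ) - (m:ℝ)|) * 2 ^ (-(q * (m:ℝ))))) *
               ENNReal.ofReal (((2:ℝ)^(min (lvl l) (lvl μ.1)) * setDist (Ω l) (Ω μ.1)) ^ (-((n:ℝ) + β))))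
            = ENNReal.ofReal (C₀ * ε ^ (-(aa - (n:ℝ) - β)) *
                (2 ^ (-(aa/2) * |(lvl l:ℝ) - (m:ℝ)|) * 2 ^ (-(q * (m:ℝ))))) *
              ∑' μ : {μ : I // lvl μ = m ∧ ε * 2 ^ (max 0 (min ((lvl l:ℝ)) ((m:ℝ)) - (ℓ l:ℝ))) ≤
                (2:ℝ)^(min (lvl l) (lvl μ)) * setDist (Ω l) (Ω μ)},
                ENNReal.ofReal (((2:ℝ)^(min (lvl l) (lvl μ.1)) * setDist (Ω l) (Ω μ.1)) ^ (-((n:ℝ) + β))) :=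
              ENNReal.tsum_mul_left
          _ ≤ ENNReal.ofReal (C₀ * ε ^ (-(aa - (n:ℝ) - β)) *
                (2 ^ (-(aa/2) * |(lvl l:ℝ) - (m:ℝ)|) * 2 ^ (-(q * (m:ℝ))))) *
              ENNReal.ofReal (Cb β * (ε * 2 ^ (max 0 (min ((lvl l:ℝ)) ((m:ℝ)) - (ℓ l:ℝ)))) ^ (-β) *
                2 ^ ((n:ℝ) * max 0 ((m:ℝ) - (lvl l:ℝ)))) :=
              mul_le_mul_right (hcount β hβ0 l m _ hRpos) _
          _ ≤ ENNReal.ofReal (K₁ * 2 ^ ((-(q * (lvl l:ℝ)) - β * ((lvl l:ℝ) - (ℓ l:ℝ))) -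
                γ₁ * |(m:ℝ) - (lvl l:ℝ)|)) := by
              rw [← ENNReal.ofReal_mul hMpos]
              apply ENNReal.ofReal_le_ofReal
              have hRb : (ε * 2 ^ (max 0 (min ((lvl l:ℝ)) ((m:ℝ)) - (ℓ l:ℝ)))) ^ (-β) =
                  ε ^ (-β) * 2 ^ (-(β * max 0 (min ((lvl l:ℝ)) ((m:ℝ)) - (ℓ l:ℝ)))) := by
                rw [Real.mul_rpow (le_of_lt hε) (by positivity),
                  ← Real.rpow_mul (by norm_num : (0:ℝ) ≤ 2)]
                congr 1
                ring
              have hpow : (2:ℝ) ^ (-(aa/2) * |(lvl l:ℝ) - (m:ℝ)|) * 2 ^ (-(q * (m:ℝ))) *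
                  2 ^ (-(β * max 0 (min ((lvl l:ℝ)) ((m:ℝ)) - (ℓ l:ℝ)))) *
                  2 ^ ((n:ℝ) * max 0 ((m:ℝ) - (lvl l:ℝ)))
                  = 2 ^ (-(aa/2) * |(lvl l:ℝ) - (m:ℝ)| -
                      β * max 0 (min ((lvl l:ℝ)) ((m:ℝ)) - (ℓ l:ℝ)) +
                      (n:ℝ) * max 0 ((m:ℝ) - (lvl l:ℝ)) - q * (m:ℝ)) := by
                rw [← Real.rpow_add two_pos, ← Real.rpow_add two_pos, ← Real.rpow_add two_pos]
                congr 1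
                ring
              have hexpo := row_exponent_bound aa β q γ₁ ((n:ℝ)) ((lvl l:ℝ)) ((ℓ l:ℝ)) ((m:ℝ))
                hγ₁A hγ₁B (le_of_lt hβ0) hll
              calc C₀ * ε ^ (-(aa - (n:ℝ) - β)) *
                    (2 ^ (-(aa/2) * |(lvl l:ℝ) - (m:ℝ)|) * 2 ^ (-(q * (m:ℝ)))) *
                  (Cb β * (ε * 2 ^ (max 0 (min ((lvl l:ℝ)) ((m:ℝ)) - (ℓ l:ℝ)))) ^ (-β) *
                    2 ^ ((n:ℝ) * max 0 ((m:ℝ) - (lvl l:ℝ))))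
                  = K₁ * (2 ^ (-(aa/2) * |(lvl l:ℝ) - (m:ℝ)|) * 2 ^ (-(q * (m:ℝ))) *
                      2 ^ (-(β * max 0 (min ((lvl l:ℝ)) ((m:ℝ)) - (ℓ l:ℝ)))) *
                      2 ^ ((n:ℝ) * max 0 ((m:ℝ) - (lvl l:ℝ)))) := by
                    rw [hRb, hK₁def]; ring
                _ = K₁ * 2 ^ (-(aa/2) * |(lvl l:ℝ) - (m:ℝ)| -
                      β * max 0 (min ((lvl l:ℝ)) ((m:ℝ)) - (ℓ l:ℝ)) +
                      (n:ℝ) * max 0 ((m:ℝ) - (lvl l:ℝ)) - q * (m:ℝ)) := by rw [hpow]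
                _ ≤ K₁ * 2 ^ ((-(q * (lvl l:ℝ)) - β * ((lvl l:ℝ) - (ℓ l:ℝ))) -
                      γ₁ * |(m:ℝ) - (lvl l:ℝ)|) := by
                    apply mul_le_mul_of_nonneg_left _ (le_of_lt hK₁pos)
                    apply Real.rpow_le_rpow_of_exponent_le one_le_two
                    calc -(aa/2) * |(lvl l:ℝ) - (m:ℝ)| -
                          β * max 0 (min ((lvl l:ℝ)) ((m:ℝ)) - (ℓ l:ℝ)) +
                          (n:ℝ) * max 0 ((m:ℝ) - (lvl l:ℝ)) - q * (m:ℝ)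
                        = -(aa/2) * |(lvl l:ℝ) - (m:ℝ)| -
                          β * max 0 (min ((lvl l:ℝ)) ((m:ℝ)) - (ℓ l:ℝ)) +
                          (n:ℝ) * max 0 ((m:ℝ) - (lvl l:ℝ)) - q * (m:ℝ) := rfl
                      _ ≤ (-(q * (lvl l:ℝ)) - β * ((lvl l:ℝ) - (ℓ l:ℝ))) -
                          γ₁ * |(m:ℝ) - (lvl l:ℝ)| := by
                          have := hexpo
                          linarith
    -- Cauchy-Schwarz
    have hcs := cs_ofReal (x := fun μ : I => Real.sqrt (|F l μ| * 2 ^ (-(q * (lvl μ:ℝ)))))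
      (y := fun μ : I => Real.sqrt (|F l μ| * 2 ^ (q * (lvl μ:ℝ))) * |v μ|)
      (fun μ => Real.sqrt_nonneg _) (fun μ => by positivity)
    have e1 : ∀ μ : I, Real.sqrt (|F l μ| * 2 ^ (-(q * (lvl μ:ℝ)))) *
        (Real.sqrt (|F l μ| * 2 ^ (q * (lvl μ:ℝ))) * |v μ|) = |F l μ| * |v μ| := by
      intro μ
      rw [← mul_assoc, ← Real.sqrt_mul (by positivity)]
      have h2q : (2:ℝ)^(-(q * (lvl μ:ℝ))) * 2^(q * (lvl μ:ℝ)) = 1 := by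
        rw [← Real.rpow_add two_pos]; norm_num
      have e : |F l μ| * 2 ^ (-(q * (lvl μ:ℝ))) * (|F l μ| * 2 ^ (q * (lvl μ:ℝ))) =
          (|F l μ|)^2 := by linear_combination (|F l μ|^2) * h2q
      rw [e, Real.sqrt_sq (abs_nonneg _)]
    have e2 : ∀ μ : I, Real.sqrt (|F l μ| * 2 ^ (-(q * (lvl μ:ℝ)))) ^ 2 =
        |F l μ| * 2 ^ (-(q * (lvl μ:ℝ))) := fun μ => Real.sq_sqrt (by positivity)
    have e3 : ∀ μ : I, (Real.sqrt (|F l μ| * 2 ^ (q * (lvl μ:ℝ))) * |v μ|) ^ 2 =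
        |F l μ| * 2 ^ (q * (lvl μ:ℝ)) * v μ ^ 2 := by
      intro μ
      rw [mul_pow, Real.sq_sqrt (by positivity), sq_abs]
    simp only [e1, e2, e3] at hcs
    exact hcs.trans (mul_le_mul_left hrow _)
  -- column bound
  have col : ∀ μ : I,
      ∑' l : Λc, ENNReal.ofReal ((2:ℝ) ^ (2 * ((lvl l.1:ℝ) - (ℓ l.1:ℝ)) * (s+t))) *
        (ENNReal.ofReal (K₁ * 2 ^ (-(q * (lvl l.1:ℝ)) - β * ((lvl l.1:ℝ) - (ℓ l.1:ℝ))) * S₁) *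
          ENNReal.ofReal (|F l.1 μ|))
        ≤ ENNReal.ofReal (K₂ * 2 ^ (-(q * (lvl μ:ℝ))) * S₂) := by
    intro μ
    have hsub : (∑' l : Λc, ENNReal.ofReal ((2:ℝ) ^ (2 * ((lvl l.1:ℝ) - (ℓ l.1:ℝ)) * (s+t))) *
          (ENNReal.ofReal (K₁ * 2 ^ (-(q * (lvl l.1:ℝ)) - β * ((lvl l.1:ℝ) - (ℓ l.1:ℝ))) * S₁) *
            ENNReal.ofReal (|F l.1 μ|)))
        = ∑' lam : I, (if lam ∈ Λc then
            ENNReal.ofReal ((2:ℝ) ^ (2 * ((lvl lam:ℝ) - (ℓ lam:ℝ)) * (s+t))) *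
              (ENNReal.ofReal (K₁ * 2 ^ (-(q * (lvl lam:ℝ)) - β * ((lvl lam:ℝ) - (ℓ lam:ℝ))) * S₁) *
                ENNReal.ofReal (|F lam μ|)) else 0) :=
      (tsum_subtype Λc (fun lam : I =>
        ENNReal.ofReal ((2:ℝ) ^ (2 * ((lvl lam:ℝ) - (ℓ lam:ℝ)) * (s+t))) *
          (ENNReal.ofReal (K₁ * 2 ^ (-(q * (lvl lam:ℝ)) - β * ((lvl lam:ℝ) - (ℓ lam:ℝ))) * S₁) *
            ENNReal.ofReal (|F lam μ|)))).trans
        (tsum_congr fun lam => by by_cases hq : lam ∈ Λc <;> simp [Set.indicator, hq])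
    rw [hsub, tsum_eq_tsum_levels lvl (fun lam => if lam ∈ Λc then
        ENNReal.ofReal ((2:ℝ) ^ (2 * ((lvl lam:ℝ) - (ℓ lam:ℝ)) * (s+t))) *
          (ENNReal.ofReal (K₁ * 2 ^ (-(q * (lvl lam:ℝ)) - β * ((lvl lam:ℝ) - (ℓ lam:ℝ))) * S₁) *
            ENNReal.ofReal (|F lam μ|)) else 0)]
    apply series_bound K₂ (-(q * (lvl μ:ℝ))) γ₂ (le_of_lt hK₂pos) hγ₂0 (lvl μ)
    intro Lv
    have hM₂pos : (0:ℝ) ≤ (K₁ * S₁) * C₀ * ε^(-c₁) *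
        (2^(-(aa/2) * |(Lv:ℝ) - (lvl μ:ℝ)|) * 2^(c₁ * max 0 ((Lv:ℝ) - (lvl μ:ℝ))) *
          2^(-(q * (Lv:ℝ)))) :=
      mul_nonneg (mul_nonneg (mul_nonneg (mul_nonneg hK₁pos.le hS₁pos.le) hC₀.le)
        (by positivity)) (by positivity)
    apply tsum_le_of_cond
      (fun lam : I => lvl lam = Lv ∧ ε ≤ (2:ℝ)^(min (lvl μ) (lvl lam)) * setDist (Ω μ) (Ω lam))
      (fun lam : I => ENNReal.ofReal ((K₁ * S₁) * C₀ * ε^(-c₁) *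
          (2^(-(aa/2) * |(Lv:ℝ) - (lvl μ:ℝ)|) * 2^(c₁ * max 0 ((Lv:ℝ) - (lvl μ:ℝ))) *
            2^(-(q * (Lv:ℝ))))) *
        ENNReal.ofReal (((2:ℝ)^(min (lvl μ) (lvl lam)) * setDist (Ω μ) (Ω lam)) ^ (-((n:ℝ) + β₂))))
    · -- pointwise bound
      intro lam
      by_cases h1 : lvl lam = Lv
      · subst h1
        by_cases h2 : lam ∈ Λc
        · by_cases h3 : F lam μ = 0
          · simp [h3]
          · have hsymm : (2:ℝ)^(min (lvl μ) (lvl lam)) * setDist (Ω μ) (Ω lam) =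
                (2:ℝ)^(min (lvl lam) (lvl μ)) * setDist (Ω lam) (Ω μ) := by
              rw [min_comm, setDist_comm]
            have hllam : (ℓ lam : ℝ) ≤ (lvl lam : ℝ) := by exact_mod_cast hℓ lam h2
            have hDpos : 0 < (2:ℝ)^(min (lvl lam) (lvl μ)) * setDist (Ω lam) (Ω μ) :=
              hd0pos lam h2 μ h3
            have hDε : ε ≤ (2:ℝ)^(min (lvl lam) (lvl μ)) * setDist (Ω lam) (Ω μ) :=
              hεd0 lam h2 μ h3
            have hQ2 : ε ≤ (2:ℝ)^(min (lvl μ) (lvl lam)) * setDist (Ω μ) (Ω lam) := by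
              rw [hsymm]; exact hDε
            rw [if_pos rfl, if_pos h2, if_pos ⟨rfl, hQ2⟩, hsymm,
              ← ENNReal.ofReal_mul
                (mul_nonneg (mul_nonneg hK₁pos.le (by positivity)) hS₁pos.le),
              ← ENNReal.ofReal_mul
                (by positivity : (0:ℝ) ≤ (2:ℝ) ^ (2 * ((lvl lam:ℝ) - (ℓ lam:ℝ)) * (s+t))),
              ← ENNReal.ofReal_mul hM₂pos]
            apply ENNReal.ofReal_le_ofReal
            -- real chain
            have hFle := hFdec lam h2 μ h3
            have hkeyD := hkey lam h2 μ h3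
            have h2e : (2:ℝ)^(max 0 (min ((lvl lam:ℝ)) ((lvl μ:ℝ)) - (ℓ lam:ℝ))) ≤
                ((2:ℝ)^(min (lvl lam) (lvl μ)) * setDist (Ω lam) (Ω μ)) / ε :=
              (le_div_iff₀ hε).2 (by linarith [hkeyD])
            have hkk := k_le_bound ((lvl lam:ℝ)) ((ℓ lam:ℝ)) ((lvl μ:ℝ)) hllam
            have hDc : (0:ℝ) ≤ ((2:ℝ)^(min (lvl lam) (lvl μ)) * setDist (Ω lam) (Ω μ)) ^ c₁ :=
              Real.rpow_nonneg hDpos.le _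
            have hDaa : (0:ℝ) ≤ ((2:ℝ)^(min (lvl lam) (lvl μ)) * setDist (Ω lam) (Ω μ)) ^ (-aa) :=
              Real.rpow_nonneg hDpos.le _
            have h2k : (2:ℝ)^(c₁ * ((lvl lam:ℝ) - (ℓ lam:ℝ))) ≤
                2^(c₁ * max 0 ((lvl lam:ℝ) - (lvl μ:ℝ))) *
                (((2:ℝ)^(min (lvl lam) (lvl μ)) * setDist (Ω lam) (Ω μ)) ^ c₁ * ε^(-c₁)) := by
              calc (2:ℝ)^(c₁ * ((lvl lam:ℝ) - (ℓ lam:ℝ)))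
                  ≤ 2^(c₁ * (max 0 ((lvl lam:ℝ) - (lvl μ:ℝ)) +
                      max 0 (min ((lvl lam:ℝ)) ((lvl μ:ℝ)) - (ℓ lam:ℝ)))) :=
                    Real.rpow_le_rpow_of_exponent_le one_le_two
                      (mul_le_mul_of_nonneg_left hkk hc₁.le)
                _ = 2^(c₁ * max 0 ((lvl lam:ℝ) - (lvl μ:ℝ))) *
                    2^(c₁ * max 0 (min ((lvl lam:ℝ)) ((lvl μ:ℝ)) - (ℓ lam:ℝ))) := by
                    rw [← Real.rpow_add two_pos]
                    congr 1
                    ring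
                _ ≤ 2^(c₁ * max 0 ((lvl lam:ℝ) - (lvl μ:ℝ))) *
                    (((2:ℝ)^(min (lvl lam) (lvl μ)) * setDist (Ω lam) (Ω μ)) ^ c₁ * ε^(-c₁)) := by
                    apply mul_le_mul_of_nonneg_left _ (by positivity)
                    calc (2:ℝ)^(c₁ * max 0 (min ((lvl lam:ℝ)) ((lvl μ:ℝ)) - (ℓ lam:ℝ)))
                        = ((2:ℝ)^(max 0 (min ((lvl lam:ℝ)) ((lvl μ:ℝ)) - (ℓ lam:ℝ))))^c₁ := by
                          rw [mul_comm, Real.rpow_mul (by norm_num : (0:ℝ) ≤ 2)]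
                      _ ≤ (((2:ℝ)^(min (lvl lam) (lvl μ)) * setDist (Ω lam) (Ω μ)) / ε)^c₁ :=
                          Real.rpow_le_rpow (by positivity) h2e hc₁.le
                      _ = ((2:ℝ)^(min (lvl lam) (lvl μ)) * setDist (Ω lam) (Ω μ)) ^ c₁ *
                          ε^(-c₁) := by
                          rw [Real.div_rpow hDpos.le hε.le, Real.rpow_neg hε.le, div_eq_mul_inv]
            have hsplit2 : ((2:ℝ)^(min (lvl lam) (lvl μ)) * setDist (Ω lam) (Ω μ)) ^ (-aa) *
                ((2:ℝ)^(min (lvl lam) (lvl μ)) * setDist (Ω lam) (Ω μ)) ^ c₁ =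
                ((2:ℝ)^(min (lvl lam) (lvl μ)) * setDist (Ω lam) (Ω μ)) ^ (-((n:ℝ) + β₂)) := by
              rw [← Real.rpow_add hDpos]
              congr 1
              linarith [haac]
            have hW : (2:ℝ)^(2 * ((lvl lam:ℝ) - (ℓ lam:ℝ)) * (s+t)) *
                2^(-(q * (lvl lam:ℝ)) - β * ((lvl lam:ℝ) - (ℓ lam:ℝ))) =
                2^(c₁ * ((lvl lam:ℝ) - (ℓ lam:ℝ))) * 2^(-(q * (lvl lam:ℝ))) := by
              rw [← Real.rpow_add two_pos, ← Real.rpow_add two_pos]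
              congr 1
              rw [hc₁def]
              ring
            calc (2:ℝ)^(2 * ((lvl lam:ℝ) - (ℓ lam:ℝ)) * (s+t)) *
                  (K₁ * 2^(-(q * (lvl lam:ℝ)) - β * ((lvl lam:ℝ) - (ℓ lam:ℝ))) * S₁ * |F lam μ|)
                = (K₁ * S₁) * ((2:ℝ)^(2 * ((lvl lam:ℝ) - (ℓ lam:ℝ)) * (s+t)) *
                    2^(-(q * (lvl lam:ℝ)) - β * ((lvl lam:ℝ) - (ℓ lam:ℝ)))) * |F lam μ| := by
                  ring
              _ = (K₁ * S₁) * (2^(c₁ * ((lvl lam:ℝ) - (ℓ lam:ℝ))) * 2^(-(q * (lvl lam:ℝ)))) *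
                  |F lam μ| := by rw [hW]
              _ ≤ (K₁ * S₁) * (2^(c₁ * ((lvl lam:ℝ) - (ℓ lam:ℝ))) * 2^(-(q * (lvl lam:ℝ)))) *
                  (C₀ * 2 ^ (-(aa/2) * |(lvl lam:ℝ) - (lvl μ:ℝ)|) *
                    ((2:ℝ)^(min (lvl lam) (lvl μ)) * setDist (Ω lam) (Ω μ)) ^ (-aa)) := by
                  apply mul_le_mul_of_nonneg_left hFle
                  have h0 : (0:ℝ) ≤ K₁ * S₁ := mul_nonneg hK₁pos.le hS₁pos.le
                  positivity
              _ = ((K₁ * S₁) * 2^(-(q * (lvl lam:ℝ))) *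
                    (C₀ * 2 ^ (-(aa/2) * |(lvl lam:ℝ) - (lvl μ:ℝ)|) *
                      ((2:ℝ)^(min (lvl lam) (lvl μ)) * setDist (Ω lam) (Ω μ)) ^ (-aa))) *
                  2^(c₁ * ((lvl lam:ℝ) - (ℓ lam:ℝ))) := by ring
              _ ≤ ((K₁ * S₁) * 2^(-(q * (lvl lam:ℝ))) *
                    (C₀ * 2 ^ (-(aa/2) * |(lvl lam:ℝ) - (lvl μ:ℝ)|) *
                      ((2:ℝ)^(min (lvl lam) (lvl μ)) * setDist (Ω lam) (Ω μ)) ^ (-aa))) *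
                  (2^(c₁ * max 0 ((lvl lam:ℝ) - (lvl μ:ℝ))) *
                    (((2:ℝ)^(min (lvl lam) (lvl μ)) * setDist (Ω lam) (Ω μ)) ^ c₁ * ε^(-c₁))) := by
                  apply mul_le_mul_of_nonneg_left h2k
                  have h0 : (0:ℝ) ≤ K₁ * S₁ := mul_nonneg hK₁pos.le hS₁pos.le
                  have h1 : (0:ℝ) ≤ (2:ℝ)^(-(q * (lvl lam:ℝ))) := by positivity
                  have h2' : (0:ℝ) ≤ C₀ * 2 ^ (-(aa/2) * |(lvl lam:ℝ) - (lvl μ:ℝ)|) := by positivity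
                  exact mul_nonneg (mul_nonneg h0 h1) (mul_nonneg h2' hDaa)
              _ = (K₁ * S₁) * C₀ * ε^(-c₁) *
                  (2^(-(aa/2) * |(lvl lam:ℝ) - (lvl μ:ℝ)|) *
                    2^(c₁ * max 0 ((lvl lam:ℝ) - (lvl μ:ℝ))) * 2^(-(q * (lvl lam:ℝ)))) *
                  ((2:ℝ)^(min (lvl lam) (lvl μ)) * setDist (Ω lam) (Ω μ)) ^ (-((n:ℝ) + β₂)) := by
                  rw [← hsplit2]
                  ring
        · rw [if_pos rfl, if_neg h2]
          exact zero_le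
      · rw [if_neg h1]
        exact zero_le
    · -- counting estimate
      calc ∑' lam : {lam : I // lvl lam = Lv ∧
            ε ≤ (2:ℝ)^(min (lvl μ) (lvl lam)) * setDist (Ω μ) (Ω lam)},
            (ENNReal.ofReal ((K₁ * S₁) * C₀ * ε^(-c₁) *
              (2^(-(aa/2) * |(Lv:ℝ) - (lvl μ:ℝ)|) * 2^(c₁ * max 0 ((Lv:ℝ) - (lvl μ:ℝ))) *
                2^(-(q * (Lv:ℝ))))) *
             ENNReal.ofReal (((2:ℝ)^(min (lvl μ) (lvl lam.1)) * setDist (Ω μ) (Ω lam.1)) ^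
               (-((n:ℝ) + β₂))))
          = ENNReal.ofReal ((K₁ * S₁) * C₀ * ε^(-c₁) *
              (2^(-(aa/2) * |(Lv:ℝ) - (lvl μ:ℝ)|) * 2^(c₁ * max 0 ((Lv:ℝ) - (lvl μ:ℝ))) *
                2^(-(q * (Lv:ℝ))))) *
            ∑' lam : {lam : I // lvl lam = Lv ∧
              ε ≤ (2:ℝ)^(min (lvl μ) (lvl lam)) * setDist (Ω μ) (Ω lam)},
              ENNReal.ofReal (((2:ℝ)^(min (lvl μ) (lvl lam.1)) * setDist (Ω μ) (Ω lam.1)) ^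
                (-((n:ℝ) + β₂))) := ENNReal.tsum_mul_left
        _ ≤ ENNReal.ofReal ((K₁ * S₁) * C₀ * ε^(-c₁) *
              (2^(-(aa/2) * |(Lv:ℝ) - (lvl μ:ℝ)|) * 2^(c₁ * max 0 ((Lv:ℝ) - (lvl μ:ℝ))) *
                2^(-(q * (Lv:ℝ))))) *
            ENNReal.ofReal (Cb β₂ * ε ^ (-β₂) * 2 ^ ((n:ℝ) * max 0 ((Lv:ℝ) - (lvl μ:ℝ)))) :=
            mul_le_mul_right (hcount β₂ hβ₂ μ Lv ε hε) _
        _ ≤ ENNReal.ofReal (K₂ * 2 ^ ((-(q * (lvl μ:ℝ))) - γ₂ * |(Lv:ℝ) - (lvl μ:ℝ)|)) := by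
            rw [← ENNReal.ofReal_mul hM₂pos]
            apply ENNReal.ofReal_le_ofReal
            have hpow2 : (2:ℝ)^(-(aa/2) * |(Lv:ℝ) - (lvl μ:ℝ)|) *
                2^(c₁ * max 0 ((Lv:ℝ) - (lvl μ:ℝ))) * 2^(-(q * (Lv:ℝ))) *
                2 ^ ((n:ℝ) * max 0 ((Lv:ℝ) - (lvl μ:ℝ)))
                = 2 ^ (-(aa/2) * |(Lv:ℝ) - (lvl μ:ℝ)| + c₁ * max 0 ((Lv:ℝ) - (lvl μ:ℝ)) +
                    (n:ℝ) * max 0 ((Lv:ℝ) - (lvl μ:ℝ)) - q * (Lv:ℝ)) := by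
              rw [← Real.rpow_add two_pos, ← Real.rpow_add two_pos, ← Real.rpow_add two_pos]
              congr 1
              ring
            have hexpo := col_exponent_bound aa c₁ q γ₂ ((n:ℝ)) ((Lv:ℝ)) ((lvl μ:ℝ)) hγ₂A hγ₂B
            calc (K₁ * S₁) * C₀ * ε^(-c₁) *
                  (2^(-(aa/2) * |(Lv:ℝ) - (lvl μ:ℝ)|) * 2^(c₁ * max 0 ((Lv:ℝ) - (lvl μ:ℝ))) *
                    2^(-(q * (Lv:ℝ)))) *
                  (Cb β₂ * ε ^ (-β₂) * 2 ^ ((n:ℝ) * max 0 ((Lv:ℝ) - (lvl μ:ℝ))))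
                = K₂ * (2^(-(aa/2) * |(Lv:ℝ) - (lvl μ:ℝ)|) *
                    2^(c₁ * max 0 ((Lv:ℝ) - (lvl μ:ℝ))) * 2^(-(q * (Lv:ℝ))) *
                    2 ^ ((n:ℝ) * max 0 ((Lv:ℝ) - (lvl μ:ℝ)))) := by
                  rw [hK₂def]
                  ring
              _ = K₂ * 2 ^ (-(aa/2) * |(Lv:ℝ) - (lvl μ:ℝ)| + c₁ * max 0 ((Lv:ℝ) - (lvl μ:ℝ)) +
                    (n:ℝ) * max 0 ((Lv:ℝ) - (lvl μ:ℝ)) - q * (Lv:ℝ)) := by rw [hpow2]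
              _ ≤ K₂ * 2 ^ ((-(q * (lvl μ:ℝ))) - γ₂ * |(Lv:ℝ) - (lvl μ:ℝ)|) := by
                  apply mul_le_mul_of_nonneg_left _ (le_of_lt hK₂pos)
                  apply Real.rpow_le_rpow_of_exponent_le one_le_two
                  linarith [hexpo]
  -- assembly
  calc ∑' l : Λc,
        ENNReal.ofReal ((2 : ℝ) ^ (2 * ((lvl l.1 : ℝ) - (ℓ l.1 : ℝ)) * (s + t))) *
          (∑' μ : I, ENNReal.ofReal (|F l.1 μ| * |v μ|)) ^ 2
      ≤ ∑' l : Λc,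
        ENNReal.ofReal ((2 : ℝ) ^ (2 * ((lvl l.1 : ℝ) - (ℓ l.1 : ℝ)) * (s + t))) *
          (ENNReal.ofReal (K₁ * 2 ^ (-(q * (lvl l.1:ℝ)) - β * ((lvl l.1:ℝ) - (ℓ l.1:ℝ))) * S₁) *
            ∑' μ : I, ENNReal.ofReal (|F l.1 μ| * 2 ^ (q * (lvl μ:ℝ)) * v μ ^ 2)) :=
      Summable.tsum_le_tsum (fun l => mul_le_mul_right (step1 l.1 l.2) _)
        ENNReal.summable ENNReal.summable
    _ = ∑' (l : Λc) (μ : I),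
        ENNReal.ofReal ((2 : ℝ) ^ (2 * ((lvl l.1 : ℝ) - (ℓ l.1 : ℝ)) * (s + t))) *
          (ENNReal.ofReal (K₁ * 2 ^ (-(q * (lvl l.1:ℝ)) - β * ((lvl l.1:ℝ) - (ℓ l.1:ℝ))) * S₁) *
            ENNReal.ofReal (|F l.1 μ| * 2 ^ (q * (lvl μ:ℝ)) * v μ ^ 2)) := by
      refine tsum_congr fun l => ?_
      rw [← ENNReal.tsum_mul_left, ← ENNReal.tsum_mul_left]
    _ = ∑' (μ : I) (l : Λc),
        ENNReal.ofReal ((2 : ℝ) ^ (2 * ((lvl l.1 : ℝ) - (ℓ l.1 : ℝ)) * (s + t))) *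
          (ENNReal.ofReal (K₁ * 2 ^ (-(q * (lvl l.1:ℝ)) - β * ((lvl l.1:ℝ) - (ℓ l.1:ℝ))) * S₁) *
            ENNReal.ofReal (|F l.1 μ| * 2 ^ (q * (lvl μ:ℝ)) * v μ ^ 2)) := ENNReal.tsum_comm
    _ = ∑' (μ : I),
        (∑' (l : Λc),
          ENNReal.ofReal ((2 : ℝ) ^ (2 * ((lvl l.1 : ℝ) - (ℓ l.1 : ℝ)) * (s + t))) *
            (ENNReal.ofReal (K₁ * 2 ^ (-(q * (lvl l.1:ℝ)) - β * ((lvl l.1:ℝ) - (ℓ l.1:ℝ))) * S₁) *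
              ENNReal.ofReal (|F l.1 μ|))) * ENNReal.ofReal (2 ^ (q * (lvl μ:ℝ)) * v μ ^ 2) := by
      refine tsum_congr fun μ => ?_
      rw [← ENNReal.tsum_mul_right]
      refine tsum_congr fun l => ?_
      have e : |F l.1 μ| * 2 ^ (q * (lvl μ:ℝ)) * v μ ^ 2 =
          |F l.1 μ| * (2 ^ (q * (lvl μ:ℝ)) * v μ ^ 2) := by ring
      rw [e, ENNReal.ofReal_mul (abs_nonneg _)]
      ring
    _ ≤ ∑' (μ : I),
        ENNReal.ofReal (K₂ * 2 ^ (-(q * (lvl μ:ℝ))) * S₂) *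
          ENNReal.ofReal (2 ^ (q * (lvl μ:ℝ)) * v μ ^ 2) :=
      Summable.tsum_le_tsum (fun μ => mul_le_mul_left (col μ) _)
        ENNReal.summable ENNReal.summable
    _ = ∑' (μ : I), ENNReal.ofReal (K₂ * S₂) * ENNReal.ofReal (v μ ^ 2) := by
      refine tsum_congr fun μ => ?_
      rw [← ENNReal.ofReal_mul (by positivity), ← ENNReal.ofReal_mul (by positivity)]
      congr 1
      have hq2' : (2:ℝ) ^ (-(q * (lvl μ:ℝ))) * 2 ^ (q * (lvl μ:ℝ)) = 1 := by
        rw [← Real.rpow_add two_pos]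
        norm_num
      linear_combination (K₂ * S₂ * v μ ^ 2) * hq2'
    _ = ENNReal.ofReal (K₂ * S₂) * ∑' (μ : I), ENNReal.ofReal (v μ ^ 2) :=
      ENNReal.tsum_mul_left
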